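/- For real ξ, η with ξη ≠ 0, the function q(x,t) = -4iξη (η cos F + iξ sin F)³ / (ξ² + (η²-ξ²) cos² F)² · e^{-iG}, with F = 4ξη(x + 4(ξ²+η²)t) and G = 2(ξ²+η²)x + 4(ξ⁴+6ξ²η²+η⁴)t, satisfies the DNLS equation i q_t + q_xx = i(|q|²q)_x on the open set where ξ² + (η²-ξ²)cos²F ≠ 0. -/

import Mathlib

open Complex

noncomputable def pdx (g : ℝ → ℝ → ℂ) (x t : ℝ) : ℂ := deriv (fun y => g y t) x

noncomputable def pdt (g : ℝ → ℝ → ℂ) (x t : ℝ) : ℂ := deriv (fun s => g x s) t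


noncomputable def Nc (ξ η θ : ℝ) : ℂ := (η:ℂ) * Real.cos θ + I * (ξ:ℂ) * Real.sin θ
noncomputable def dNc (ξ η θ : ℝ) : ℂ := -(η:ℂ) * Real.sin θ + I * (ξ:ℂ) * Real.cos θ
noncomputable def Pc (ξ η θ : ℝ) : ℂ := (ξ:ℂ)^2 + ((η:ℂ)^2 - (ξ:ℂ)^2) * (Real.cos θ:ℂ)^2
noncomputable def dPc (ξ η θ : ℝ) : ℂ := -2*((η:ℂ)^2 - (ξ:ℂ)^2) * Real.cos θ * Real.sin θ
noncomputable def ddPc (ξ η θ : ℝ) : ℂ := -2*((η:ℂ)^2 - (ξ:ℂ)^2) * ((Real.cos θ:ℂ)^2 - (Real.sin θ:ℂ)^2)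
noncomputable def Anum (ξ η θ : ℝ) : ℂ := -4*I*(ξ:ℂ)*(η:ℂ) * (Nc ξ η θ)^3
noncomputable def dAnum (ξ η θ : ℝ) : ℂ := -12*I*(ξ:ℂ)*(η:ℂ) * (Nc ξ η θ)^2 * dNc ξ η θ
noncomputable def ddAnum (ξ η θ : ℝ) : ℂ := -12*I*(ξ:ℂ)*(η:ℂ) * (2*(Nc ξ η θ)*(dNc ξ η θ)^2 - (Nc ξ η θ)^3)
noncomputable def A1num (ξ η θ : ℝ) : ℂ := dAnum ξ η θ * Pc ξ η θ - 2 * Anum ξ η θ * dPc ξ η θ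
noncomputable def dA1num (ξ η θ : ℝ) : ℂ :=
  ddAnum ξ η θ * Pc ξ η θ - dAnum ξ η θ * dPc ξ η θ - 2 * Anum ξ η θ * ddPc ξ η θ
noncomputable def A2num (ξ η θ : ℝ) : ℂ := dA1num ξ η θ * Pc ξ η θ - 3 * A1num ξ η θ * dPc ξ η θ
noncomputable def Bnum (ξ η θ : ℝ) : ℂ := 16*(ξ:ℂ)^2*(η:ℂ)^2 * Anum ξ η θ
noncomputable def B1num (ξ η θ : ℝ) : ℂ := 16*(ξ:ℂ)^2*(η:ℂ)^2 * dAnum ξ η θ * Pc ξ η θ - 3 * Bnum ξ η θ * dPc ξ η θ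
noncomputable def Af (ξ η θ : ℝ) : ℂ := Anum ξ η θ / (Pc ξ η θ)^2
noncomputable def A1f (ξ η θ : ℝ) : ℂ := A1num ξ η θ / (Pc ξ η θ)^3
noncomputable def A2f (ξ η θ : ℝ) : ℂ := A2num ξ η θ / (Pc ξ η θ)^4
noncomputable def Bf (ξ η θ : ℝ) : ℂ := Bnum ξ η θ / (Pc ξ η θ)^3
noncomputable def B1f (ξ η θ : ℝ) : ℂ := B1num ξ η θ / (Pc ξ η θ)^4

lemma hcos (θ:ℝ) : HasDerivAt (fun θ:ℝ => (Real.cos θ:ℂ)) (-(Real.sin θ:ℂ)) θ := by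
  simpa using (Real.hasDerivAt_cos θ).ofReal_comp
lemma hsin (θ:ℝ) : HasDerivAt (fun θ:ℝ => (Real.sin θ:ℂ)) ((Real.cos θ:ℂ)) θ :=
  (Real.hasDerivAt_sin θ).ofReal_comp

lemma hN (ξ η θ : ℝ) : HasDerivAt (fun θ => Nc ξ η θ) (dNc ξ η θ) θ := by
  have h := ((hcos θ).const_mul (η:ℂ)).add ((hsin θ).const_mul (I*(ξ:ℂ)))
  have e1 : (fun θ:ℝ => Nc ξ η θ) = (fun y:ℝ => (η:ℂ) * (Real.cos y:ℂ) + (I*(ξ:ℂ)) * (Real.sin y:ℂ)) := by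
    funext y; unfold Nc; ring
  have e2 : dNc ξ η θ = (η:ℂ) * (-(Real.sin θ:ℂ)) + (I*(ξ:ℂ)) * (Real.cos θ:ℂ) := by unfold dNc; ring
  rw [e1, e2]; exact h

lemma hdN (ξ η θ : ℝ) : HasDerivAt (fun θ => dNc ξ η θ) (-(Nc ξ η θ)) θ := by
  have h := ((hsin θ).const_mul (-(η:ℂ))).add ((hcos θ).const_mul (I*(ξ:ℂ)))
  have e1 : (fun θ:ℝ => dNc ξ η θ) = (fun y:ℝ => (-(η:ℂ)) * (Real.sin y:ℂ) + (I*(ξ:ℂ)) * (Real.cos y:ℂ)) := by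
    funext y; unfold dNc; ring
  have e2 : -(Nc ξ η θ) = (-(η:ℂ)) * (Real.cos θ:ℂ) + (I*(ξ:ℂ)) * (-(Real.sin θ:ℂ)) := by unfold Nc; ring
  rw [e1, e2]; exact h

lemma hP (ξ η θ : ℝ) : HasDerivAt (fun θ => Pc ξ η θ) (dPc ξ η θ) θ := by
  have h := (((hcos θ).mul (hcos θ)).const_mul ((η:ℂ)^2-(ξ:ℂ)^2)).const_add ((ξ:ℂ)^2)
  have e1 : (fun θ:ℝ => Pc ξ η θ) = (fun y:ℝ => (ξ:ℂ)^2 + ((η:ℂ)^2-(ξ:ℂ)^2) * ((Real.cos y:ℂ) * (Real.cos y:ℂ))) := by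
    funext y; unfold Pc; ring
  have e2 : dPc ξ η θ = ((η:ℂ)^2-(ξ:ℂ)^2) * (-(Real.sin θ:ℂ) * (Real.cos θ:ℂ) + (Real.cos θ:ℂ) * (-(Real.sin θ:ℂ))) := by
    unfold dPc; ring
  rw [e1, e2]; exact h

lemma hdP (ξ η θ : ℝ) : HasDerivAt (fun θ => dPc ξ η θ) (ddPc ξ η θ) θ := by
  have h := ((hcos θ).mul (hsin θ)).const_mul (-2*((η:ℂ)^2-(ξ:ℂ)^2))
  have e1 : (fun θ:ℝ => dPc ξ η θ) = (fun y:ℝ => (-2*((η:ℂ)^2-(ξ:ℂ)^2)) * ((Real.cos y:ℂ) * (Real.sin y:ℂ))) := by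
    funext y; unfold dPc; ring
  have e2 : ddPc ξ η θ = (-2*((η:ℂ)^2-(ξ:ℂ)^2)) * (-(Real.sin θ:ℂ) * (Real.sin θ:ℂ) + (Real.cos θ:ℂ) * (Real.cos θ:ℂ)) := by
    unfold ddPc; ring
  rw [e1, e2]; exact h

lemma hAnum (ξ η θ : ℝ) : HasDerivAt (fun θ => Anum ξ η θ) (dAnum ξ η θ) θ := by
  have h := (((hN ξ η θ).mul (hN ξ η θ)).mul (hN ξ η θ)).const_mul (-4*I*(ξ:ℂ)*(η:ℂ))
  have e1 : (fun θ:ℝ => Anum ξ η θ) = (fun y:ℝ => (-4*I*(ξ:ℂ)*(η:ℂ)) * ((Nc ξ η y * Nc ξ η y) * Nc ξ η y)) := by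
    funext y; unfold Anum; ring
  have e2 : dAnum ξ η θ = (-4*I*(ξ:ℂ)*(η:ℂ)) * ((dNc ξ η θ * Nc ξ η θ + Nc ξ η θ * dNc ξ η θ) * Nc ξ η θ
      + (Nc ξ η θ * Nc ξ η θ) * dNc ξ η θ) := by unfold dAnum; ring
  rw [e1, e2]; exact h

lemma hdAnum (ξ η θ : ℝ) : HasDerivAt (fun θ => dAnum ξ η θ) (ddAnum ξ η θ) θ := by
  have h := (((hN ξ η θ).mul (hN ξ η θ)).mul (hdN ξ η θ)).const_mul (-12*I*(ξ:ℂ)*(η:ℂ))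
  have e1 : (fun θ:ℝ => dAnum ξ η θ) = (fun y:ℝ => (-12*I*(ξ:ℂ)*(η:ℂ)) * ((Nc ξ η y * Nc ξ η y) * dNc ξ η y)) := by
    funext y; unfold dAnum; ring
  have e2 : ddAnum ξ η θ = (-12*I*(ξ:ℂ)*(η:ℂ)) * ((dNc ξ η θ * Nc ξ η θ + Nc ξ η θ * dNc ξ η θ) * dNc ξ η θ
      + (Nc ξ η θ * Nc ξ η θ) * (-(Nc ξ η θ))) := by unfold ddAnum; ring
  rw [e1, e2]; exact h

lemma hA1num (ξ η θ : ℝ) : HasDerivAt (fun θ => A1num ξ η θ) (dA1num ξ η θ) θ := by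
  have h := ((hdAnum ξ η θ).mul (hP ξ η θ)).sub (((hAnum ξ η θ).mul (hdP ξ η θ)).const_mul 2)
  have e1 : (fun θ:ℝ => A1num ξ η θ) = (fun y:ℝ => dAnum ξ η y * Pc ξ η y - 2 * (Anum ξ η y * dPc ξ η y)) := by
    funext y; unfold A1num; ring
  have e2 : dA1num ξ η θ = (ddAnum ξ η θ * Pc ξ η θ + dAnum ξ η θ * dPc ξ η θ)
      - 2 * (dAnum ξ η θ * dPc ξ η θ + Anum ξ η θ * ddPc ξ η θ) := by unfold dA1num; ring
  rw [e1, e2]; exact h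

lemma hA (ξ η θ : ℝ) (h0 : Pc ξ η θ ≠ 0) : HasDerivAt (fun θ => Af ξ η θ) (A1f ξ η θ) θ := by
  have hden : Pc ξ η θ * Pc ξ η θ ≠ 0 := mul_ne_zero h0 h0
  have h := (hAnum ξ η θ).div ((hP ξ η θ).mul (hP ξ η θ)) hden
  have e1 : (fun θ:ℝ => Af ξ η θ) = (fun y:ℝ => Anum ξ η y / (Pc ξ η y * Pc ξ η y)) := by
    funext y; unfold Af; ring_nf
  have e2 : A1f ξ η θ = (dAnum ξ η θ * (Pc ξ η θ * Pc ξ η θ)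
      - Anum ξ η θ * (dPc ξ η θ * Pc ξ η θ + Pc ξ η θ * dPc ξ η θ)) / (Pc ξ η θ * Pc ξ η θ)^2 := by
    unfold A1f A1num; field_simp; ring
  rw [e1, e2]; exact h

lemma hA1 (ξ η θ : ℝ) (h0 : Pc ξ η θ ≠ 0) : HasDerivAt (fun θ => A1f ξ η θ) (A2f ξ η θ) θ := by
  have hden : Pc ξ η θ * Pc ξ η θ * Pc ξ η θ ≠ 0 := mul_ne_zero (mul_ne_zero h0 h0) h0
  have h := (hA1num ξ η θ).div (((hP ξ η θ).mul (hP ξ η θ)).mul (hP ξ η θ)) hden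
  have e1 : (fun θ:ℝ => A1f ξ η θ) = (fun y:ℝ => A1num ξ η y / (Pc ξ η y * Pc ξ η y * Pc ξ η y)) := by
    funext y; unfold A1f; ring_nf
  have e2 : A2f ξ η θ = (dA1num ξ η θ * (Pc ξ η θ * Pc ξ η θ * Pc ξ η θ)
      - A1num ξ η θ * ((dPc ξ η θ * Pc ξ η θ + Pc ξ η θ * dPc ξ η θ) * Pc ξ η θ
        + Pc ξ η θ * Pc ξ η θ * dPc ξ η θ)) / (Pc ξ η θ * Pc ξ η θ * Pc ξ η θ)^2 := by
    unfold A2f A2num; field_simp; ring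
  rw [e1, e2]; exact h

lemma hB (ξ η θ : ℝ) (h0 : Pc ξ η θ ≠ 0) : HasDerivAt (fun θ => Bf ξ η θ) (B1f ξ η θ) θ := by
  have hden : Pc ξ η θ * Pc ξ η θ * Pc ξ η θ ≠ 0 := mul_ne_zero (mul_ne_zero h0 h0) h0
  have h := ((hAnum ξ η θ).const_mul (16*(ξ:ℂ)^2*(η:ℂ)^2)).div
      (((hP ξ η θ).mul (hP ξ η θ)).mul (hP ξ η θ)) hden
  have e1 : (fun θ:ℝ => Bf ξ η θ) = (fun y:ℝ => (16*(ξ:ℂ)^2*(η:ℂ)^2) * Anum ξ η y / (Pc ξ η y * Pc ξ η y * Pc ξ η y)) := by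
    funext y; unfold Bf Bnum; ring_nf
  have e2 : B1f ξ η θ = ((16*(ξ:ℂ)^2*(η:ℂ)^2) * dAnum ξ η θ * (Pc ξ η θ * Pc ξ η θ * Pc ξ η θ)
      - (16*(ξ:ℂ)^2*(η:ℂ)^2) * Anum ξ η θ * ((dPc ξ η θ * Pc ξ η θ + Pc ξ η θ * dPc ξ η θ) * Pc ξ η θ
        + Pc ξ η θ * Pc ξ η θ * dPc ξ η θ)) / (Pc ξ η θ * Pc ξ η θ * Pc ξ η θ)^2 := by
    unfold B1f B1num Bnum; field_simp; ring
  rw [e1, e2]; exact h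
noncomputable def Ff (ξ η x t : ℝ) : ℝ := 4*ξ*η*(x + 4*(ξ^2+η^2)*t)
noncomputable def Ef (ξ η x t : ℝ) : ℂ :=
  Complex.exp (-I * ((2*(ξ^2+η^2)*x + 4*(ξ^4+6*ξ^2*η^2+η^4)*t : ℝ) : ℂ))

noncomputable def Dxf (ξ η x t : ℝ) : ℂ :=
  (4*(ξ:ℂ)*η * A1f ξ η (Ff ξ η x t) - I*(2*((ξ:ℂ)^2+(η:ℂ)^2)) * Af ξ η (Ff ξ η x t)) * Ef ξ η x t
noncomputable def Dtf (ξ η x t : ℝ) : ℂ :=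
  (16*(ξ:ℂ)*η*((ξ:ℂ)^2+(η:ℂ)^2) * A1f ξ η (Ff ξ η x t)
    - I*(4*((ξ:ℂ)^4+6*(ξ:ℂ)^2*(η:ℂ)^2+(η:ℂ)^4)) * Af ξ η (Ff ξ η x t)) * Ef ξ η x t
noncomputable def DDxf (ξ η x t : ℝ) : ℂ :=
  ((4*(ξ:ℂ)*η)^2 * A2f ξ η (Ff ξ η x t)
    - 2*I*(4*(ξ:ℂ)*η)*(2*((ξ:ℂ)^2+(η:ℂ)^2)) * A1f ξ η (Ff ξ η x t)
    - (2*((ξ:ℂ)^2+(η:ℂ)^2))^2 * Af ξ η (Ff ξ η x t)) * Ef ξ η x t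
noncomputable def DBf (ξ η x t : ℝ) : ℂ :=
  (4*(ξ:ℂ)*η * B1f ξ η (Ff ξ η x t) - I*(2*((ξ:ℂ)^2+(η:ℂ)^2)) * Bf ξ η (Ff ξ η x t)) * Ef ξ η x t

lemma hFx (ξ η t x : ℝ) : HasDerivAt (fun y => Ff ξ η y t) (4*ξ*η) x := by
  have h := ((hasDerivAt_id x).add_const (4*(ξ^2+η^2)*t)).const_mul (4*ξ*η)
  have e1 : (fun y => Ff ξ η y t) = (fun y => 4*ξ*η * (y + 4*(ξ^2+η^2)*t)) := by
    funext y; unfold Ff; ring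
  rw [e1]; simpa using h

lemma hFt (ξ η x t : ℝ) : HasDerivAt (fun τ => Ff ξ η x τ) (16*ξ*η*(ξ^2+η^2)) t := by
  have h := (((hasDerivAt_id t).const_mul (4*(ξ^2+η^2))).const_add x).const_mul (4*ξ*η)
  have e1 : (fun τ => Ff ξ η x τ) = (fun τ => 4*ξ*η * (x + 4*(ξ^2+η^2)*τ)) := by
    funext τ; unfold Ff; ring
  rw [e1]; have e2 : (16*ξ*η*(ξ^2+η^2) : ℝ) = 4*ξ*η*(4*(ξ^2+η^2)*1) := by ring
  rw [e2]; exact h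

lemma hEx (ξ η t x : ℝ) : HasDerivAt (fun y => Ef ξ η y t)
    (-I*(2*((ξ:ℂ)^2+(η:ℂ)^2)) * Ef ξ η x t) x := by
  have hin : HasDerivAt (fun y : ℝ => 2*(ξ^2+η^2)*y + 4*(ξ^4+6*ξ^2*η^2+η^4)*t) (2*(ξ^2+η^2)) x := by
    have h := ((hasDerivAt_id x).const_mul (2*(ξ^2+η^2))).add_const (4*(ξ^4+6*ξ^2*η^2+η^4)*t)
    simpa using h
  have h := ((hin.ofReal_comp).const_mul (-I)).cexp
  have e2 : -I*(2*((ξ:ℂ)^2+(η:ℂ)^2)) * Ef ξ η x t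
      = Complex.exp (-I * ((2*(ξ^2+η^2)*x + 4*(ξ^4+6*ξ^2*η^2+η^4)*t : ℝ) : ℂ)) * (-I * ((2*(ξ^2+η^2) : ℝ) : ℂ)) := by
    unfold Ef; push_cast; ring
  rw [show (fun y => Ef ξ η y t) = (fun y => Complex.exp (-I * ((2*(ξ^2+η^2)*y + 4*(ξ^4+6*ξ^2*η^2+η^4)*t : ℝ) : ℂ))) from rfl, e2]
  exact h

lemma hEt (ξ η x t : ℝ) : HasDerivAt (fun τ => Ef ξ η x τ)
    (-I*(4*((ξ:ℂ)^4+6*(ξ:ℂ)^2*(η:ℂ)^2+(η:ℂ)^4)) * Ef ξ η x t) t := by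
  have hin : HasDerivAt (fun τ : ℝ => 2*(ξ^2+η^2)*x + 4*(ξ^4+6*ξ^2*η^2+η^4)*τ) (4*(ξ^4+6*ξ^2*η^2+η^4)) t := by
    have h := (((hasDerivAt_id t).const_mul (4*(ξ^4+6*ξ^2*η^2+η^4))).const_add (2*(ξ^2+η^2)*x))
    simpa using h
  have h := ((hin.ofReal_comp).const_mul (-I)).cexp
  have e2 : -I*(4*((ξ:ℂ)^4+6*(ξ:ℂ)^2*(η:ℂ)^2+(η:ℂ)^4)) * Ef ξ η x t
      = Complex.exp (-I * ((2*(ξ^2+η^2)*x + 4*(ξ^4+6*ξ^2*η^2+η^4)*t : ℝ) : ℂ)) * (-I * ((4*(ξ^4+6*ξ^2*η^2+η^4) : ℝ) : ℂ)) := by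
    unfold Ef; push_cast; ring
  rw [show (fun τ => Ef ξ η x τ) = (fun τ => Complex.exp (-I * ((2*(ξ^2+η^2)*x + 4*(ξ^4+6*ξ^2*η^2+η^4)*τ : ℝ) : ℂ))) from rfl, e2]
  exact h

lemma hQx (ξ η x t : ℝ) (h0 : Pc ξ η (Ff ξ η x t) ≠ 0) :
    HasDerivAt (fun y => Af ξ η (Ff ξ η y t) * Ef ξ η y t) (Dxf ξ η x t) x := by
  have h1 : HasDerivAt (fun y => Af ξ η (Ff ξ η y t)) ((4*ξ*η) • A1f ξ η (Ff ξ η x t)) x :=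
    by have := (hA ξ η (Ff ξ η x t) h0).scomp x (hFx ξ η t x); exact this
  have h := h1.mul (hEx ξ η t x)
  have e2 : Dxf ξ η x t = ((4*ξ*η) • A1f ξ η (Ff ξ η x t)) * Ef ξ η x t
      + Af ξ η (Ff ξ η x t) * (-I*(2*((ξ:ℂ)^2+(η:ℂ)^2)) * Ef ξ η x t) := by
    unfold Dxf; simp only [Complex.real_smul]; push_cast; ring
  rw [e2]; exact h

lemma hQt (ξ η x t : ℝ) (h0 : Pc ξ η (Ff ξ η x t) ≠ 0) :
    HasDerivAt (fun τ => Af ξ η (Ff ξ η x τ) * Ef ξ η x τ) (Dtf ξ η x t) t := by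
  have h1 : HasDerivAt (fun τ => Af ξ η (Ff ξ η x τ)) ((16*ξ*η*(ξ^2+η^2)) • A1f ξ η (Ff ξ η x t)) t :=
    (hA ξ η (Ff ξ η x t) h0).scomp t (hFt ξ η x t)
  have h := h1.mul (hEt ξ η x t)
  have e2 : Dtf ξ η x t = ((16*ξ*η*(ξ^2+η^2)) • A1f ξ η (Ff ξ η x t)) * Ef ξ η x t
      + Af ξ η (Ff ξ η x t) * (-I*(4*((ξ:ℂ)^4+6*(ξ:ℂ)^2*(η:ℂ)^2+(η:ℂ)^4)) * Ef ξ η x t) := by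
    unfold Dtf; simp only [Complex.real_smul]; push_cast; ring
  rw [e2]; exact h

lemma hDx2 (ξ η x t : ℝ) (h0 : Pc ξ η (Ff ξ η x t) ≠ 0) :
    HasDerivAt (fun y => Dxf ξ η y t) (DDxf ξ η x t) x := by
  have h1 : HasDerivAt (fun y => A1f ξ η (Ff ξ η y t)) ((4*ξ*η) • A2f ξ η (Ff ξ η x t)) x :=
    by have := (hA1 ξ η (Ff ξ η x t) h0).scomp x (hFx ξ η t x); exact this
  have h2 : HasDerivAt (fun y => Af ξ η (Ff ξ η y t)) ((4*ξ*η) • A1f ξ η (Ff ξ η x t)) x :=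
    by have := (hA ξ η (Ff ξ η x t) h0).scomp x (hFx ξ η t x); exact this
  have h := ((h1.const_mul (4*(ξ:ℂ)*η)).sub
      (h2.const_mul (I*(2*((ξ:ℂ)^2+(η:ℂ)^2))))).mul (hEx ξ η t x)
  have e1 : (fun y => Dxf ξ η y t)
      = (fun y => (4*(ξ:ℂ)*η * A1f ξ η (Ff ξ η y t) - I*(2*((ξ:ℂ)^2+(η:ℂ)^2)) * Af ξ η (Ff ξ η y t)) * Ef ξ η y t) := rfl
  have e2 : DDxf ξ η x t = (4*(ξ:ℂ)*η * ((4*ξ*η) • A2f ξ η (Ff ξ η x t))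
        - I*(2*((ξ:ℂ)^2+(η:ℂ)^2)) * ((4*ξ*η) • A1f ξ η (Ff ξ η x t))) * Ef ξ η x t
      + (4*(ξ:ℂ)*η * A1f ξ η (Ff ξ η x t) - I*(2*((ξ:ℂ)^2+(η:ℂ)^2)) * Af ξ η (Ff ξ η x t))
        * (-I*(2*((ξ:ℂ)^2+(η:ℂ)^2)) * Ef ξ η x t) := by
    unfold DDxf; simp only [Complex.real_smul]; push_cast; ring_nf
    simp only [Complex.I_sq]; ring
  rw [e1, e2]; exact h

lemma hBx (ξ η x t : ℝ) (h0 : Pc ξ η (Ff ξ η x t) ≠ 0) :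
    HasDerivAt (fun y => Bf ξ η (Ff ξ η y t) * Ef ξ η y t) (DBf ξ η x t) x := by
  have h1 : HasDerivAt (fun y => Bf ξ η (Ff ξ η y t)) ((4*ξ*η) • B1f ξ η (Ff ξ η x t)) x :=
    by have := (hB ξ η (Ff ξ η x t) h0).scomp x (hFx ξ η t x); exact this
  have h := h1.mul (hEx ξ η t x)
  have e2 : DBf ξ η x t = ((4*ξ*η) • B1f ξ η (Ff ξ η x t)) * Ef ξ η x t
      + Bf ξ η (Ff ξ η x t) * (-I*(2*((ξ:ℂ)^2+(η:ℂ)^2)) * Ef ξ η x t) := by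
    unfold DBf; simp only [Complex.real_smul]; push_cast; ring
  rw [e2]; exact h

lemma keyNum (ξ η θ : ℝ) :
    I*(16*(ξ:ℂ)*η*((ξ:ℂ)^2+(η:ℂ)^2)*(A1num ξ η θ * Pc ξ η θ)
        - I*(4*((ξ:ℂ)^4+6*(ξ:ℂ)^2*(η:ℂ)^2+(η:ℂ)^4))*(Anum ξ η θ * (Pc ξ η θ)^2))
      + ((4*(ξ:ℂ)*η)^2 * A2num ξ η θ
        - 2*I*(4*(ξ:ℂ)*η)*(2*((ξ:ℂ)^2+(η:ℂ)^2))*(A1num ξ η θ * Pc ξ η θ)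
        - (2*((ξ:ℂ)^2+(η:ℂ)^2))^2*(Anum ξ η θ * (Pc ξ η θ)^2))
    = I*(4*(ξ:ℂ)*η * B1num ξ η θ - I*(2*((ξ:ℂ)^2+(η:ℂ)^2))*(Bnum ξ η θ * Pc ξ η θ)) := by
  have h : ((Real.sin θ:ℝ):ℂ)^2 = 1 - ((Real.cos θ:ℝ):ℂ)^2 := by
    have h' : Real.sin θ^2 = 1 - Real.cos θ^2 := by
      have := Real.sin_sq_add_cos_sq θ; linarith
    exact_mod_cast h'
  have hI : (I:ℂ)^2 = -1 := Complex.I_sq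
  simp only [A2num, B1num, dA1num, A1num, Bnum, ddAnum, dAnum, Anum, Nc, dNc, Pc, dPc, ddPc]
  linear_combination ((16)*(ξ:ℂ)*(η:ℂ)^12*((Real.cos θ:ℝ):ℂ)^7*I + (48)*(ξ:ℂ)^2*(η:ℂ)^11*((Real.cos θ:ℝ):ℂ)^6*((Real.sin θ:ℝ):ℂ)*I^2 + (-96)*(ξ:ℂ)^3*(η:ℂ)^10*((Real.cos θ:ℝ):ℂ)^5*I + (48)*(ξ:ℂ)^3*(η:ℂ)^10*((Real.cos θ:ℝ):ℂ)^5*((Real.sin θ:ℝ):ℂ)^2*I^3 + (64)*(ξ:ℂ)^3*(η:ℂ)^10*((Real.cos θ:ℝ):ℂ)^7*I + (1152)*(ξ:ℂ)^4*(η:ℂ)^9*((Real.cos θ:ℝ):ℂ)^4*((Real.sin θ:ℝ):ℂ) + (-288)*(ξ:ℂ)^4*(η:ℂ)^9*((Real.cos θ:ℝ):ℂ)^4*((Real.sin θ:ℝ):ℂ)*I^2 + (-1152)*(ξ:ℂ)^4*(η:ℂ)^9*((Real.cos θ:ℝ):ℂ)^4*((Real.sin θ:ℝ):ℂ)^3 +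 (16)*(ξ:ℂ)^4*(η:ℂ)^9*((Real.cos θ:ℝ):ℂ)^4*((Real.sin θ:ℝ):ℂ)^3*I^4 + (-1152)*(ξ:ℂ)^4*(η:ℂ)^9*((Real.cos θ:ℝ):ℂ)^6*((Real.sin θ:ℝ):ℂ) + (192)*(ξ:ℂ)^4*(η:ℂ)^9*((Real.cos θ:ℝ):ℂ)^6*((Real.sin θ:ℝ):ℂ)*I^2 + (-112)*(ξ:ℂ)^5*(η:ℂ)^8*((Real.cos θ:ℝ):ℂ)^3*I + (3456)*(ξ:ℂ)^5*(η:ℂ)^8*((Real.cos θ:ℝ):ℂ)^3*((Real.sin θ:ℝ):ℂ)^2*I + (-288)*(ξ:ℂ)^5*(η:ℂ)^8*((Real.cos θ:ℝ):ℂ)^3*((Real.sin θ:ℝ):ℂ)^2*I^3 + (-2304)*(ξ:ℂ)^5*(η:ℂ)^8*((Real.cos θ:ℝ):ℂ)^3*((Real.sin θ:ℝ):ℂ)^4*I + (928)*(ξ:ℂ)^5*(η:ℂ)^8*((Real.cos θ:ℝ):ℂ)^5*I + (-2688)*(ξ:ℂ)^5*(η:ℂ)^8*((Real.cos θ:ℝ):ℂ)^5*((Real.sin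 θ:ℝ):ℂ)^2*I + (192)*(ξ:ℂ)^5*(η:ℂ)^8*((Real.cos θ:ℝ):ℂ)^5*((Real.sin θ:ℝ):ℂ)^2*I^3 + (-544)*(ξ:ℂ)^5*(η:ℂ)^8*((Real.cos θ:ℝ):ℂ)^7*I + (-384)*(ξ:ℂ)^6*(η:ℂ)^7*((Real.cos θ:ℝ):ℂ)^2*((Real.sin θ:ℝ):ℂ) + (-336)*(ξ:ℂ)^6*(η:ℂ)^7*((Real.cos θ:ℝ):ℂ)^2*((Real.sin θ:ℝ):ℂ)*I^2 + (-896)*(ξ:ℂ)^6*(η:ℂ)^7*((Real.cos θ:ℝ):ℂ)^2*((Real.sin θ:ℝ):ℂ)^3 + (3968)*(ξ:ℂ)^6*(η:ℂ)^7*((Real.cos θ:ℝ):ℂ)^2*((Real.sin θ:ℝ):ℂ)^3*I^2 + (-96)*(ξ:ℂ)^6*(η:ℂ)^7*((Real.cos θ:ℝ):ℂ)^2*((Real.sin θ:ℝ):ℂ)^3*I^4 + (1280)*(ξ:ℂ)^6*(η:ℂ)^7*((Real.cos θ:ℝ):ℂ)^2*((Real.sin θ:ℝ):ℂ)^5 +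 (-1280)*(ξ:ℂ)^6*(η:ℂ)^7*((Real.cos θ:ℝ):ℂ)^2*((Real.sin θ:ℝ):ℂ)^5*I^2 + (-2304)*(ξ:ℂ)^6*(η:ℂ)^7*((Real.cos θ:ℝ):ℂ)^4*((Real.sin θ:ℝ):ℂ) + (2016)*(ξ:ℂ)^6*(η:ℂ)^7*((Real.cos θ:ℝ):ℂ)^4*((Real.sin θ:ℝ):ℂ)*I^2 + (3968)*(ξ:ℂ)^6*(η:ℂ)^7*((Real.cos θ:ℝ):ℂ)^4*((Real.sin θ:ℝ):ℂ)^3 + (-1664)*(ξ:ℂ)^6*(η:ℂ)^7*((Real.cos θ:ℝ):ℂ)^4*((Real.sin θ:ℝ):ℂ)^3*I^2 + (64)*(ξ:ℂ)^6*(η:ℂ)^7*((Real.cos θ:ℝ):ℂ)^4*((Real.sin θ:ℝ):ℂ)^3*I^4 + (2688)*(ξ:ℂ)^6*(η:ℂ)^7*((Real.cos θ:ℝ):ℂ)^6*((Real.sin θ:ℝ):ℂ) + (-864)*(ξ:ℂ)^6*(η:ℂ)^7*((Real.cos θ:ℝ):ℂ)^6*((Real.sin θ:ℝ):ℂ)*I^2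 + (-1152)*(ξ:ℂ)^7*(η:ℂ)^6*((Real.cos θ:ℝ):ℂ)*((Real.sin θ:ℝ):ℂ)^2*I + (-336)*(ξ:ℂ)^7*(η:ℂ)^6*((Real.cos θ:ℝ):ℂ)*((Real.sin θ:ℝ):ℂ)^2*I^3 + (768)*(ξ:ℂ)^7*(η:ℂ)^6*((Real.cos θ:ℝ):ℂ)*((Real.sin θ:ℝ):ℂ)^4*I + (1536)*(ξ:ℂ)^7*(η:ℂ)^6*((Real.cos θ:ℝ):ℂ)*((Real.sin θ:ℝ):ℂ)^4*I^3 + (736)*(ξ:ℂ)^7*(η:ℂ)^6*((Real.cos θ:ℝ):ℂ)^3*I + (-5376)*(ξ:ℂ)^7*(η:ℂ)^6*((Real.cos θ:ℝ):ℂ)^3*((Real.sin θ:ℝ):ℂ)^2*I + (1248)*(ξ:ℂ)^7*(η:ℂ)^6*((Real.cos θ:ℝ):ℂ)^3*((Real.sin θ:ℝ):ℂ)^2*I^3 + (4608)*(ξ:ℂ)^7*(η:ℂ)^6*((Real.cos θ:ℝ):ℂ)^3*((Real.sin θ:ℝ):ℂ)^4*I + (-1568)*(ξ:ℂ)^7*(η:ℂ)^6*((Real.cos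 θ:ℝ):ℂ)^5*I + (5376)*(ξ:ℂ)^7*(η:ℂ)^6*((Real.cos θ:ℝ):ℂ)^5*((Real.sin θ:ℝ):ℂ)^2*I + (-480)*(ξ:ℂ)^7*(η:ℂ)^6*((Real.cos θ:ℝ):ℂ)^5*((Real.sin θ:ℝ):ℂ)^2*I^3 + (832)*(ξ:ℂ)^7*(η:ℂ)^6*((Real.cos θ:ℝ):ℂ)^7*I + (256)*(ξ:ℂ)^8*(η:ℂ)^5*((Real.sin θ:ℝ):ℂ)^3 + (-640)*(ξ:ℂ)^8*(η:ℂ)^5*((Real.sin θ:ℝ):ℂ)^3*I^2 + (-112)*(ξ:ℂ)^8*(η:ℂ)^5*((Real.sin θ:ℝ):ℂ)^3*I^4 + (-256)*(ξ:ℂ)^8*(η:ℂ)^5*((Real.sin θ:ℝ):ℂ)^5 + (256)*(ξ:ℂ)^8*(η:ℂ)^5*((Real.sin θ:ℝ):ℂ)^5*I^2 + (1440)*(ξ:ℂ)^8*(η:ℂ)^5*((Real.cos θ:ℝ):ℂ)^2*((Real.sin θ:ℝ):ℂ)*I^2 + (2304)*(ξ:ℂ)^8*(η:ℂ)^5*((Real.cos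 θ:ℝ):ℂ)^2*((Real.sin θ:ℝ):ℂ)^3 + (-5376)*(ξ:ℂ)^8*(η:ℂ)^5*((Real.cos θ:ℝ):ℂ)^2*((Real.sin θ:ℝ):ℂ)^3*I^2 + (160)*(ξ:ℂ)^8*(η:ℂ)^5*((Real.cos θ:ℝ):ℂ)^2*((Real.sin θ:ℝ):ℂ)^3*I^4 + (-2560)*(ξ:ℂ)^8*(η:ℂ)^5*((Real.cos θ:ℝ):ℂ)^2*((Real.sin θ:ℝ):ℂ)^5 + (2560)*(ξ:ℂ)^8*(η:ℂ)^5*((Real.cos θ:ℝ):ℂ)^2*((Real.sin θ:ℝ):ℂ)^5*I^2 + (1920)*(ξ:ℂ)^8*(η:ℂ)^5*((Real.cos θ:ℝ):ℂ)^4*((Real.sin θ:ℝ):ℂ) + (-2400)*(ξ:ℂ)^8*(η:ℂ)^5*((Real.cos θ:ℝ):ℂ)^4*((Real.sin θ:ℝ):ℂ)*I^2 + (-4480)*(ξ:ℂ)^8*(η:ℂ)^5*((Real.cos θ:ℝ):ℂ)^4*((Real.sin θ:ℝ):ℂ)^3 + (3328)*(ξ:ℂ)^8*(η:ℂ)^5*((Real.cos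 θ:ℝ):ℂ)^4*((Real.sin θ:ℝ):ℂ)^3*I^2 + (-160)*(ξ:ℂ)^8*(η:ℂ)^5*((Real.cos θ:ℝ):ℂ)^4*((Real.sin θ:ℝ):ℂ)^3*I^4 + (-1920)*(ξ:ℂ)^8*(η:ℂ)^5*((Real.cos θ:ℝ):ℂ)^6*((Real.sin θ:ℝ):ℂ) + (960)*(ξ:ℂ)^8*(η:ℂ)^5*((Real.cos θ:ℝ):ℂ)^6*((Real.sin θ:ℝ):ℂ)*I^2 + (768)*(ξ:ℂ)^9*(η:ℂ)^4*((Real.cos θ:ℝ):ℂ)*((Real.sin θ:ℝ):ℂ)^2*I + (672)*(ξ:ℂ)^9*(η:ℂ)^4*((Real.cos θ:ℝ):ℂ)*((Real.sin θ:ℝ):ℂ)^2*I^3 + (-768)*(ξ:ℂ)^9*(η:ℂ)^4*((Real.cos θ:ℝ):ℂ)*((Real.sin θ:ℝ):ℂ)^4*I + (-1536)*(ξ:ℂ)^9*(η:ℂ)^4*((Real.cos θ:ℝ):ℂ)*((Real.sin θ:ℝ):ℂ)^4*I^3 + (-368)*(ξ:ℂ)^9*(η:ℂ)^4*((Real.cos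 θ:ℝ):ℂ)^3*I + (1920)*(ξ:ℂ)^9*(η:ℂ)^4*((Real.cos θ:ℝ):ℂ)^3*((Real.sin θ:ℝ):ℂ)^2*I + (-864)*(ξ:ℂ)^9*(η:ℂ)^4*((Real.cos θ:ℝ):ℂ)^3*((Real.sin θ:ℝ):ℂ)^2*I^3 + (-2304)*(ξ:ℂ)^9*(η:ℂ)^4*((Real.cos θ:ℝ):ℂ)^3*((Real.sin θ:ℝ):ℂ)^4*I + (736)*(ξ:ℂ)^9*(η:ℂ)^4*((Real.cos θ:ℝ):ℂ)^5*I + (-2688)*(ξ:ℂ)^9*(η:ℂ)^4*((Real.cos θ:ℝ):ℂ)^5*((Real.sin θ:ℝ):ℂ)^2*I + (192)*(ξ:ℂ)^9*(η:ℂ)^4*((Real.cos θ:ℝ):ℂ)^5*((Real.sin θ:ℝ):ℂ)^2*I^3 + (-368)*(ξ:ℂ)^9*(η:ℂ)^4*((Real.cos θ:ℝ):ℂ)^7*I + (-256)*(ξ:ℂ)^10*(η:ℂ)^3*((Real.sin θ:ℝ):ℂ)^3 + (256)*(ξ:ℂ)^10*(η:ℂ)^3*((Real.sin θ:ℝ):ℂ)^3*I^2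 + (-32)*(ξ:ℂ)^10*(η:ℂ)^3*((Real.sin θ:ℝ):ℂ)^3*I^4 + (256)*(ξ:ℂ)^10*(η:ℂ)^3*((Real.sin θ:ℝ):ℂ)^5 + (-256)*(ξ:ℂ)^10*(η:ℂ)^3*((Real.sin θ:ℝ):ℂ)^5*I^2 + (384)*(ξ:ℂ)^10*(η:ℂ)^3*((Real.cos θ:ℝ):ℂ)^2*((Real.sin θ:ℝ):ℂ) + (-336)*(ξ:ℂ)^10*(η:ℂ)^3*((Real.cos θ:ℝ):ℂ)^2*((Real.sin θ:ℝ):ℂ)*I^2 + (-1408)*(ξ:ℂ)^10*(η:ℂ)^3*((Real.cos θ:ℝ):ℂ)^2*((Real.sin θ:ℝ):ℂ)^3 + (1408)*(ξ:ℂ)^10*(η:ℂ)^3*((Real.cos θ:ℝ):ℂ)^2*((Real.sin θ:ℝ):ℂ)^3*I^2 + (-32)*(ξ:ℂ)^10*(η:ℂ)^3*((Real.cos θ:ℝ):ℂ)^2*((Real.sin θ:ℝ):ℂ)^3*I^4 + (1280)*(ξ:ℂ)^10*(η:ℂ)^3*((Real.cos θ:ℝ):ℂ)^2*((Real.sin θ:ℝ):ℂ)^5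 + (-1280)*(ξ:ℂ)^10*(η:ℂ)^3*((Real.cos θ:ℝ):ℂ)^2*((Real.sin θ:ℝ):ℂ)^5*I^2 + (-768)*(ξ:ℂ)^10*(η:ℂ)^3*((Real.cos θ:ℝ):ℂ)^4*((Real.sin θ:ℝ):ℂ) + (672)*(ξ:ℂ)^10*(η:ℂ)^3*((Real.cos θ:ℝ):ℂ)^4*((Real.sin θ:ℝ):ℂ)*I^2 + (1664)*(ξ:ℂ)^10*(η:ℂ)^3*((Real.cos θ:ℝ):ℂ)^4*((Real.sin θ:ℝ):ℂ)^3 + (-1664)*(ξ:ℂ)^10*(η:ℂ)^3*((Real.cos θ:ℝ):ℂ)^4*((Real.sin θ:ℝ):ℂ)^3*I^2 + (64)*(ξ:ℂ)^10*(η:ℂ)^3*((Real.cos θ:ℝ):ℂ)^4*((Real.sin θ:ℝ):ℂ)^3*I^4 + (384)*(ξ:ℂ)^10*(η:ℂ)^3*((Real.cos θ:ℝ):ℂ)^6*((Real.sin θ:ℝ):ℂ) + (-336)*(ξ:ℂ)^10*(η:ℂ)^3*((Real.cos θ:ℝ):ℂ)^6*((Real.sin θ:ℝ):ℂ)*I^2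 + (48)*(ξ:ℂ)^11*(η:ℂ)^2*((Real.cos θ:ℝ):ℂ)*((Real.sin θ:ℝ):ℂ)^2*I^3 + (-96)*(ξ:ℂ)^11*(η:ℂ)^2*((Real.cos θ:ℝ):ℂ)^3*((Real.sin θ:ℝ):ℂ)^2*I^3 + (48)*(ξ:ℂ)^11*(η:ℂ)^2*((Real.cos θ:ℝ):ℂ)^5*((Real.sin θ:ℝ):ℂ)^2*I^3 + (16)*(ξ:ℂ)^12*(η:ℂ)*((Real.sin θ:ℝ):ℂ)^3*I^4 + (-32)*(ξ:ℂ)^12*(η:ℂ)*((Real.cos θ:ℝ):ℂ)^2*((Real.sin θ:ℝ):ℂ)^3*I^4 + (16)*(ξ:ℂ)^12*(η:ℂ)*((Real.cos θ:ℝ):ℂ)^4*((Real.sin θ:ℝ):ℂ)^3*I^4) * hI + ((-128)*(ξ:ℂ)^3*(η:ℂ)^10*((Real.cos θ:ℝ):ℂ)^5*I + (1152)*(ξ:ℂ)^4*(η:ℂ)^9*((Real.cos θ:ℝ):ℂ)^4*((Real.sin θ:ℝ):ℂ) + (-128)*(ξ:ℂ)^5*(η:ℂ)^8*((Real.cos θ:ℝ):ℂ)^3*I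 + (2304)*(ξ:ℂ)^5*(η:ℂ)^8*((Real.cos θ:ℝ):ℂ)^3*((Real.sin θ:ℝ):ℂ)^2*I + (640)*(ξ:ℂ)^5*(η:ℂ)^8*((Real.cos θ:ℝ):ℂ)^5*I + (-384)*(ξ:ℂ)^6*(η:ℂ)^7*((Real.cos θ:ℝ):ℂ)^2*((Real.sin θ:ℝ):ℂ) + (-1280)*(ξ:ℂ)^6*(η:ℂ)^7*((Real.cos θ:ℝ):ℂ)^2*((Real.sin θ:ℝ):ℂ)^3 + (-2688)*(ξ:ℂ)^6*(η:ℂ)^7*((Real.cos θ:ℝ):ℂ)^4*((Real.sin θ:ℝ):ℂ) + (-768)*(ξ:ℂ)^7*(η:ℂ)^6*((Real.cos θ:ℝ):ℂ)*((Real.sin θ:ℝ):ℂ)^2*I + (512)*(ξ:ℂ)^7*(η:ℂ)^6*((Real.cos θ:ℝ):ℂ)^3*I + (-4608)*(ξ:ℂ)^7*(η:ℂ)^6*((Real.cos θ:ℝ):ℂ)^3*((Real.sin θ:ℝ):ℂ)^2*I + (-896)*(ξ:ℂ)^7*(η:ℂ)^6*((Real.cos θ:ℝ):ℂ)^5*I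 + (256)*(ξ:ℂ)^8*(η:ℂ)^5*((Real.sin θ:ℝ):ℂ)^3 + (2560)*(ξ:ℂ)^8*(η:ℂ)^5*((Real.cos θ:ℝ):ℂ)^2*((Real.sin θ:ℝ):ℂ)^3 + (1920)*(ξ:ℂ)^8*(η:ℂ)^5*((Real.cos θ:ℝ):ℂ)^4*((Real.sin θ:ℝ):ℂ) + (768)*(ξ:ℂ)^9*(η:ℂ)^4*((Real.cos θ:ℝ):ℂ)*((Real.sin θ:ℝ):ℂ)^2*I + (-384)*(ξ:ℂ)^9*(η:ℂ)^4*((Real.cos θ:ℝ):ℂ)^3*I + (2304)*(ξ:ℂ)^9*(η:ℂ)^4*((Real.cos θ:ℝ):ℂ)^3*((Real.sin θ:ℝ):ℂ)^2*I + (384)*(ξ:ℂ)^9*(η:ℂ)^4*((Real.cos θ:ℝ):ℂ)^5*I + (-256)*(ξ:ℂ)^10*(η:ℂ)^3*((Real.sin θ:ℝ):ℂ)^3 + (384)*(ξ:ℂ)^10*(η:ℂ)^3*((Real.cos θ:ℝ):ℂ)^2*((Real.sin θ:ℝ):ℂ) + (-1280)*(ξ:ℂ)^10*(η:ℂ)^3*((Real.cos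 θ:ℝ):ℂ)^2*((Real.sin θ:ℝ):ℂ)^3 + (-384)*(ξ:ℂ)^10*(η:ℂ)^3*((Real.cos θ:ℝ):ℂ)^4*((Real.sin θ:ℝ):ℂ)) * h

lemma finalId (ξ η θ : ℝ) (h0 : Pc ξ η θ ≠ 0) :
    I * (16*(ξ:ℂ)*η*((ξ:ℂ)^2+(η:ℂ)^2) * A1f ξ η θ
        - I*(4*((ξ:ℂ)^4+6*(ξ:ℂ)^2*(η:ℂ)^2+(η:ℂ)^4)) * Af ξ η θ)
      + ((4*(ξ:ℂ)*η)^2 * A2f ξ η θ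
        - 2*I*(4*(ξ:ℂ)*η)*(2*((ξ:ℂ)^2+(η:ℂ)^2)) * A1f ξ η θ
        - (2*((ξ:ℂ)^2+(η:ℂ)^2))^2 * Af ξ η θ)
    = I * (4*(ξ:ℂ)*η * B1f ξ η θ - I*(2*((ξ:ℂ)^2+(η:ℂ)^2)) * Bf ξ η θ) := by
  have eL : I * (16*(ξ:ℂ)*η*((ξ:ℂ)^2+(η:ℂ)^2) * A1f ξ η θ
        - I*(4*((ξ:ℂ)^4+6*(ξ:ℂ)^2*(η:ℂ)^2+(η:ℂ)^4)) * Af ξ η θ)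
      + ((4*(ξ:ℂ)*η)^2 * A2f ξ η θ
        - 2*I*(4*(ξ:ℂ)*η)*(2*((ξ:ℂ)^2+(η:ℂ)^2)) * A1f ξ η θ
        - (2*((ξ:ℂ)^2+(η:ℂ)^2))^2 * Af ξ η θ)
      = (I*(16*(ξ:ℂ)*η*((ξ:ℂ)^2+(η:ℂ)^2)*(A1num ξ η θ * Pc ξ η θ)
          - I*(4*((ξ:ℂ)^4+6*(ξ:ℂ)^2*(η:ℂ)^2+(η:ℂ)^4))*(Anum ξ η θ * (Pc ξ η θ)^2))
        + ((4*(ξ:ℂ)*η)^2 * A2num ξ η θ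
          - 2*I*(4*(ξ:ℂ)*η)*(2*((ξ:ℂ)^2+(η:ℂ)^2))*(A1num ξ η θ * Pc ξ η θ)
          - (2*((ξ:ℂ)^2+(η:ℂ)^2))^2*(Anum ξ η θ * (Pc ξ η θ)^2))) / (Pc ξ η θ)^4 := by
    have eA : Af ξ η θ = Anum ξ η θ * (Pc ξ η θ)^2 / (Pc ξ η θ)^4 := by
      unfold Af; rw [div_eq_div_iff (pow_ne_zero 2 h0) (pow_ne_zero 4 h0)]; ring
    have eA1 : A1f ξ η θ = A1num ξ η θ * Pc ξ η θ / (Pc ξ η θ)^4 := by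
      unfold A1f; rw [div_eq_div_iff (pow_ne_zero 3 h0) (pow_ne_zero 4 h0)]; ring
    have eA2 : A2f ξ η θ = A2num ξ η θ / (Pc ξ η θ)^4 := rfl
    rw [eA, eA1, eA2]; ring
  have eR : I * (4*(ξ:ℂ)*η * B1f ξ η θ - I*(2*((ξ:ℂ)^2+(η:ℂ)^2)) * Bf ξ η θ)
      = (I*(4*(ξ:ℂ)*η * B1num ξ η θ
          - I*(2*((ξ:ℂ)^2+(η:ℂ)^2))*(Bnum ξ η θ * Pc ξ η θ))) / (Pc ξ η θ)^4 := by
    have eB : Bf ξ η θ = Bnum ξ η θ * Pc ξ η θ / (Pc ξ η θ)^4 := by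
      unfold Bf; rw [div_eq_div_iff (pow_ne_zero 3 h0) (pow_ne_zero 4 h0)]; ring
    have eB1 : B1f ξ η θ = B1num ξ η θ / (Pc ξ η θ)^4 := rfl
    rw [eB, eB1]; ring
  rw [eL, eR, keyNum]
lemma cubeId (x y c s : ℂ) (h : s^2 = 1 - c^2) :
    (-4*I*x*y*(y*c+I*x*s)^3) * (4*I*x*y*(y*c-I*x*s)^3)
      = 16*x^2*y^2*(x^2+(y^2-x^2)*c^2)^3 := by
  have hI : (I:ℂ)^2 = -1 := Complex.I_sq
  linear_combination ((-16)*x^2*y^8*c^6 + (-48)*x^4*y^6*c^4*s^2 + (48)*x^4*y^6*c^4*s^2*I^2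
      + (-48)*x^6*y^4*c^2*s^4 + (48)*x^6*y^4*c^2*s^4*I^2 + (-48)*x^6*y^4*c^2*s^4*I^4
      + (-16)*x^8*y^2*s^6 + (16)*x^8*y^2*s^6*I^2 + (-16)*x^8*y^2*s^6*I^4 + (16)*x^8*y^2*s^6*I^6) * hI
    + ((48)*x^4*y^6*c^4 + (48)*x^6*y^4*c^2 + (48)*x^6*y^4*c^2*s^2 + (-48)*x^6*y^4*c^4 + (16)*x^8*y^2
      + (16)*x^8*y^2*s^2 + (16)*x^8*y^2*s^4 + (-32)*x^8*y^2*c^2 + (-16)*x^8*y^2*c^2*s^2 + (16)*x^8*y^2*c^4) * h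

lemma pythC (θ : ℝ) : ((Real.sin θ:ℝ):ℂ)^2 = 1 - ((Real.cos θ:ℝ):ℂ)^2 := by
  have h' : Real.sin θ^2 = 1 - Real.cos θ^2 := by
    have := Real.sin_sq_add_cos_sq θ; linarith
  exact_mod_cast h'

lemma conjE (ξ η x t : ℝ) : Ef ξ η x t * (starRingEnd ℂ) (Ef ξ η x t) = 1 := by
  unfold Ef
  rw [← Complex.exp_conj, ← Complex.exp_add]
  have : (-I * ((2*(ξ^2+η^2)*x + 4*(ξ^4+6*ξ^2*η^2+η^4)*t : ℝ) : ℂ))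
      + (starRingEnd ℂ) (-I * ((2*(ξ^2+η^2)*x + 4*(ξ^4+6*ξ^2*η^2+η^4)*t : ℝ) : ℂ)) = 0 := by
    simp [map_mul, Complex.conj_I, Complex.conj_ofReal, map_ofNat]
  rw [this, Complex.exp_zero]

lemma conjAf (ξ η θ : ℝ) : (starRingEnd ℂ) (Af ξ η θ)
    = (4*I*(ξ:ℂ)*η*((η:ℂ)*Real.cos θ - I*(ξ:ℂ)*Real.sin θ)^3) / (Pc ξ η θ)^2 := by
  unfold Af Anum Nc Pc
  rw [map_div₀]
  congr 1
  · simp only [map_mul, map_pow, map_add, map_sub, map_neg, Complex.conj_I, Complex.conj_ofReal,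
      map_ofNat]
    ring
  · simp only [map_mul, map_pow, map_add, map_sub, Complex.conj_I, Complex.conj_ofReal]

lemma cubeAf (ξ η θ : ℝ) :
    Af ξ η θ * Af ξ η θ * (starRingEnd ℂ) (Af ξ η θ) = Bf ξ η θ := by
  rw [conjAf]
  by_cases h0 : Pc ξ η θ = 0
  · simp [Af, Bf, h0, Anum, Bnum]
  · have key := cubeId (ξ:ℂ) (η:ℂ) ((Real.cos θ:ℝ):ℂ) ((Real.sin θ:ℝ):ℂ) (pythC θ)
    have hd1 : (Pc ξ η θ)^2 * (Pc ξ η θ)^2 * (Pc ξ η θ)^2 ≠ 0 := by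
      exact mul_ne_zero (mul_ne_zero (pow_ne_zero 2 h0) (pow_ne_zero 2 h0)) (pow_ne_zero 2 h0)
    unfold Af Bf Bnum
    rw [div_mul_div_comm, div_mul_div_comm, div_eq_div_iff hd1 (pow_ne_zero 3 h0)]
    unfold Anum Nc Pc
    unfold Pc at h0
    linear_combination ((-4*I*(ξ:ℂ)*η*((η:ℂ)*Real.cos θ+I*(ξ:ℂ)*Real.sin θ)^3)
      * ((ξ:ℂ)^2+((η:ℂ)^2-(ξ:ℂ)^2)*((Real.cos θ:ℝ):ℂ)^2)^3) * key

lemma cube (ξ η x t : ℝ) :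
    (Af ξ η (Ff ξ η x t) * Ef ξ η x t) * (starRingEnd ℂ) (Af ξ η (Ff ξ η x t) * Ef ξ η x t)
        * (Af ξ η (Ff ξ η x t) * Ef ξ η x t)
      = Bf ξ η (Ff ξ η x t) * Ef ξ η x t := by
  rw [map_mul]
  calc (Af ξ η (Ff ξ η x t) * Ef ξ η x t)
        * ((starRingEnd ℂ) (Af ξ η (Ff ξ η x t)) * (starRingEnd ℂ) (Ef ξ η x t))
        * (Af ξ η (Ff ξ η x t) * Ef ξ η x t)
      = (Af ξ η (Ff ξ η x t) * Af ξ η (Ff ξ η x t) * (starRingEnd ℂ) (Af ξ η (Ff ξ η x t)))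
        * (Ef ξ η x t * (starRingEnd ℂ) (Ef ξ η x t)) * Ef ξ η x t := by ring
    _ = Bf ξ η (Ff ξ η x t) * Ef ξ η x t := by rw [conjE, cubeAf, mul_one]

/-- For real `ξ, η` with `ξη ≠ 0`, the function
`q(x,t) = -4iξη (η cos F + iξ sin F)³ / (ξ² + (η²-ξ²) cos² F)² · e^{-iG}`,
with `F = 4ξη(x + 4(ξ²+η²)t)` and `G = 2(ξ²+η²)x + 4(ξ⁴+6ξ²η²+η⁴)t`, satisfies the DNLS
equation `i q_t + q_xx = i (q q* q)_x` on the open set where `ξ² + (η²-ξ²)cos²F ≠ 0`. -/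
theorem stmt10 (ξ η : ℝ) (hξη : ξ * η ≠ 0)
    (q : ℝ → ℝ → ℂ)
    (hq : ∀ x t : ℝ, q x t =
      -4 * I * (ξ : ℂ) * (η : ℂ) *
          ((η : ℂ) * Real.cos (4*ξ*η*(x + 4*(ξ^2+η^2)*t))
            + I * (ξ : ℂ) * Real.sin (4*ξ*η*(x + 4*(ξ^2+η^2)*t)))^3
        / (((ξ : ℂ)^2 + ((η : ℂ)^2 - (ξ : ℂ)^2) *
            ((Real.cos (4*ξ*η*(x + 4*(ξ^2+η^2)*t)) : ℂ))^2)^2)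
        * Complex.exp (-I * ((2*(ξ^2+η^2)*x + 4*(ξ^4+6*ξ^2*η^2+η^4)*t : ℝ) : ℂ))) :
    ∀ x t : ℝ,
      ξ^2 + (η^2 - ξ^2) * (Real.cos (4*ξ*η*(x + 4*(ξ^2+η^2)*t)))^2 ≠ 0 →
      I * pdt q x t + pdx (pdx q) x t
        = I * pdx (fun y s => (q y s * (starRingEnd ℂ) (q y s)) * q y s) x t := by

  intro x t hPreal
  have hfun : ∀ y τ : ℝ, q y τ = Af ξ η (Ff ξ η y τ) * Ef ξ η y τ := by
    intro y τ; rw [hq y τ]; rfl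
  have hPofReal : ∀ y τ : ℝ, Pc ξ η (Ff ξ η y τ)
      = ((ξ^2 + (η^2 - ξ^2) * (Real.cos (Ff ξ η y τ))^2 : ℝ) : ℂ) := by
    intro y τ; unfold Pc; push_cast; ring
  have hPx : Pc ξ η (Ff ξ η x t) ≠ 0 := by
    rw [hPofReal]
    exact Complex.ofReal_ne_zero.mpr hPreal
  have ht : pdt q x t = Dtf ξ η x t := by
    unfold pdt
    have e : (fun s => q x s) = (fun τ => Af ξ η (Ff ξ η x τ) * Ef ξ η x τ) :=
      funext (hfun x)
    rw [e]
    exact (hQt ξ η x t hPx).deriv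
  have hopen : IsOpen {y : ℝ | Pc ξ η (Ff ξ η y t) ≠ 0} := by
    have hc : Continuous fun y : ℝ => Pc ξ η (Ff ξ η y t) := by
      unfold Pc Ff; fun_prop
    exact isOpen_compl_singleton.preimage hc
  have hxx : pdx (pdx q) x t = DDxf ξ η x t := by
    unfold pdx
    have hev : (fun y => deriv (fun z => q z t) y) =ᶠ[nhds x] (fun y => Dxf ξ η y t) := by
      filter_upwards [hopen.mem_nhds hPx] with y hy
      have e : (fun z => q z t) = (fun z => Af ξ η (Ff ξ η z t) * Ef ξ η z t) :=
        funext (fun z => hfun z t)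
      rw [e]
      exact (hQx ξ η y t hy).deriv
    rw [hev.deriv_eq]
    exact (hDx2 ξ η x t hPx).deriv
  have hrhs : pdx (fun y s => (q y s * (starRingEnd ℂ) (q y s)) * q y s) x t = DBf ξ η x t := by
    unfold pdx
    have e : (fun y => (q y t * (starRingEnd ℂ) (q y t)) * q y t)
        = (fun y => Bf ξ η (Ff ξ η y t) * Ef ξ η y t) := by
      funext y
      rw [hfun y t]
      exact cube ξ η y t
    rw [e]
    exact (hBx ξ η x t hPx).deriv
  rw [ht, hxx, hrhs]
  have hfin := finalId ξ η (Ff ξ η x t) hPx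
  unfold Dtf DDxf DBf
  linear_combination Ef ξ η x t * hfin
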